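/- (Proposition: terminal comparison at the final deadline T_K.) Let u : 𝒮̄ → ℝ be upper semicontinuous such that for every x ∈ 𝒮: u(x) ≤ w_K·[G_K − x₀ − (x₁ − C(−x₁))⁺]⁺ and u(x) ≤ M[u]^*(x). Let v : 𝒮̄ → ℝ be lower semicontinuous such that for every x ∈ 𝒮: v(x) ≥ w_K·[G_K − x₀ − (x₁ − C(−x₁))⁺]⁺ or v(x) ≥ M[v]_*(x). Assume u((0,0)) ≤ v((0,0)), v((0,0)) = w_K G_K, and for all x ∈ 𝒮̄: 0 ≤ u(x) ≤ w_K G_K and −c(1 + |x|^{p₀}) ≤ v(x) ≤ w_K G_K. Then u(x) ≤ v(x) for all x ∈ 𝒮̄. -/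

import Mathlib

open Set Filter

/-- The closed positive quadrant of portfolio positions. -/
def Sbar : Set (ℝ × ℝ) := Set.Ici 0 ×ˢ Set.Ici 0

/-- The positive quadrant without the origin. -/
def Sset : Set (ℝ × ℝ) := Sbar \ {(0, 0)}

/-- A transaction cost function. -/
def IsCostFn (C : ℝ → ℝ) : Prop :=
  Continuous C ∧ (∀ d₁ d₂ : ℝ, |d₁| ≤ |d₂| → C d₁ ≤ C d₂) ∧ 0 < C 0 ∧
    StrictMono (fun d => d + C d) ∧ Set.Ici (0 : ℝ) ⊆ Set.range (fun d => d + C d)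

/-- The rebalancing map. -/
def Gam (C : ℝ → ℝ) (x : ℝ × ℝ) (d : ℝ) : ℝ × ℝ := (x.1 - d - C d, x.2 + d)

/-- The set of feasible transactions. -/
def Dset (C : ℝ → ℝ) (x : ℝ × ℝ) : Set ℝ := {d | Gam C x d ∈ Sbar}

/-- The intervention operator, with value `+∞` if no transaction is feasible. -/
noncomputable def Mop (C : ℝ → ℝ) (g : ℝ × ℝ → ℝ) (x : ℝ × ℝ) : EReal :=
  ⨅ d ∈ Dset C x, ((g (Gam C x d) : ℝ) : EReal)

/-- Upper semicontinuous envelope of `h` computed on `E`. -/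
noncomputable def uscEnv {α : Type*} [TopologicalSpace α]
    (h : α → EReal) (E : Set α) (z : α) : EReal :=
  Filter.limsup h (nhdsWithin z E)

/-- Lower semicontinuous envelope of `h` computed on `E`. -/
noncomputable def lscEnv {α : Type*} [TopologicalSpace α]
    (h : α → EReal) (E : Set α) (z : α) : EReal :=
  Filter.liminf h (nhdsWithin z E)

/-- Euclidean norm on `ℝ²`. -/
noncomputable def eunorm (p : ℝ × ℝ) : ℝ := Real.sqrt (p.1 ^ 2 + p.2 ^ 2)

lemma sbar_closed : IsClosed Sbar := isClosed_Ici.prod isClosed_Ici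

lemma mem_Sbar {p : ℝ × ℝ} : p ∈ Sbar ↔ 0 ≤ p.1 ∧ 0 ≤ p.2 :=
  ⟨fun h => ⟨h.1, h.2⟩, fun h => ⟨h.1, h.2⟩⟩

lemma mem_Dset {C : ℝ → ℝ} {x : ℝ × ℝ} {d : ℝ} :
    d ∈ Dset C x ↔ 0 ≤ x.1 - d - C d ∧ 0 ≤ x.2 + d := by
  simp [Dset, Gam, mem_Sbar]

lemma cost_ge {C : ℝ → ℝ} (hC : IsCostFn C) (d : ℝ) : C 0 ≤ C d :=
  hC.2.1 0 d (by simpa using abs_nonneg d)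

/-- u-side: subsolution value is dominated by its value after a strictly feasible
transaction. -/
lemma uside_strict {C : ℝ → ℝ} (hC : IsCostFn C) {u : ℝ × ℝ → ℝ}
    (hu : UpperSemicontinuousOn u Sbar) {x : ℝ × ℝ} (hx : x ∈ Sbar)
    (hMop : (u x : EReal) ≤ uscEnv (Mop C u) Sbar x)
    {d' : ℝ} (h1 : -x.2 < d') (h2 : d' + C d' < x.1) :
    u x ≤ u (Gam C x d') := by
  set z' : ℝ × ℝ := Gam C x d' with hz'
  have hz'1 : 0 < z'.1 := by simp only [hz', Gam]; linarith
  have hz'2 : 0 < z'.2 := by simp only [hz', Gam]; linarith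
  have hz'mem : z' ∈ Sbar := mem_Sbar.mpr ⟨hz'1.le, hz'2.le⟩
  by_contra hlt
  push_neg at hlt
  set a : ℝ := (u z' + u x) / 2 with ha
  have ha1 : u z' < a := by simp only [ha]; linarith
  have ha2 : a < u x := by simp only [ha]; linarith
  have husc := hu z' hz'mem a ha1
  rw [eventually_nhdsWithin_iff] at husc
  -- continuity of y ↦ Gam C y d'
  have hF : Filter.Tendsto (fun y : ℝ × ℝ => Gam C y d') (nhds x) (nhds z') := by
    rw [hz']
    exact ((continuous_fst.sub continuous_const).sub continuous_const).prodMk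
      (continuous_snd.add continuous_const) |>.tendsto x
  have hW : ∀ᶠ y in nhds x, Gam C y d' ∈ Sbar → u (Gam C y d') < a := hF.eventually husc
  have hA : ∀ᶠ y : ℝ × ℝ in nhds x, d' + C d' < y.1 :=
    (continuous_fst.tendsto x).eventually (eventually_gt_nhds h2)
  have hB : ∀ᶠ y : ℝ × ℝ in nhds x, -d' < y.2 :=
    (continuous_snd.tendsto x).eventually (eventually_gt_nhds (by linarith : -d' < x.2))
  have hev : ∀ᶠ y in nhdsWithin x Sbar, Mop C u y ≤ (a : EReal) := by
    filter_upwards [((hW.and (hA.and hB)).filter_mono nhdsWithin_le_nhds),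
      eventually_mem_nhdsWithin] with y hy _
    obtain ⟨hWy, hAy, hBy⟩ := hy
    have hmem : Gam C y d' ∈ Sbar := mem_Sbar.mpr ⟨by simp [Gam]; linarith, by simp [Gam]; linarith⟩
    have hDd : d' ∈ Dset C y := hmem
    have := iInf₂_le (f := fun d (_ : d ∈ Dset C y) => ((u (Gam C y d) : ℝ) : EReal)) d' hDd
    refine this.trans ?_
    exact_mod_cast (hWy hmem).le
  have hlim : uscEnv (Mop C u) Sbar x ≤ (a : EReal) := Filter.limsup_le_of_le (h := hev)
  have : u x ≤ a := by exact_mod_cast hMop.trans hlim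
  linarith

/-- u-side, general feasible transaction, under nondegeneracy. -/
lemma uside {C : ℝ → ℝ} (hC : IsCostFn C) {u : ℝ × ℝ → ℝ}
    (hu : UpperSemicontinuousOn u Sbar) {x : ℝ × ℝ} (hx : x ∈ Sbar)
    (hMop : (u x : EReal) ≤ uscEnv (Mop C u) Sbar x)
    {db : ℝ} (hd : db ∈ Dset C x) (hnd : -x.2 + C (-x.2) < x.1) :
    u x ≤ u (Gam C x db) := by
  obtain ⟨hd1, hd2⟩ := mem_Dset.mp hd
  -- find a strictly feasible point w
  have hgc : Filter.Tendsto (fun t => t + C t) (nhds (-x.2)) (nhds (-x.2 + C (-x.2))) :=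
    (continuous_id.add hC.1).tendsto (-x.2)
  have hev : ∀ᶠ t in nhds (-x.2), t + C t < x.1 := hgc.eventually (eventually_lt_nhds hnd)
  obtain ⟨w, hw1, hw2⟩ :=
    ((hev.filter_mono (nhdsWithin_le_nhds (s := Set.Ioi (-x.2)))).and
      eventually_mem_nhdsWithin).exists
  -- hw1 : w + C w < x.1, hw2 : w ∈ Ioi (-x.2)
  have hw2' : -x.2 < w := hw2
  -- the approximating transactions
  set dk : ℕ → ℝ := fun k => db + (w - db) * (1 / ((k : ℝ) + 1)) with hdk
  have hθpos : ∀ k : ℕ, 0 < 1 / ((k : ℝ) + 1) := fun k => by positivity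
  have hθle : ∀ k : ℕ, 1 / ((k : ℝ) + 1) ≤ 1 := fun k => by
    rw [div_le_one (by positivity)]; simp [Nat.cast_nonneg]
  have hstrict : ∀ k : ℕ, -x.2 < dk k ∧ dk k + C (dk k) < x.1 := by
    intro k
    set θ := 1 / ((k : ℝ) + 1)
    have hθ1 : 0 < θ := hθpos k
    have hθ2 : θ ≤ 1 := hθle k
    constructor
    · have : dk k + x.2 = (db + x.2) * (1 - θ) + θ * (w + x.2) := by
        simp only [hdk]; ring
      nlinarith [hw2', hd2]
    · rcases le_or_gt db w with hc | hc
      · have hle : dk k ≤ w := by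
          have : dk k - w = (db - w) * (1 - θ) := by simp only [hdk]; ring
          nlinarith
        calc dk k + C (dk k) ≤ w + C w := hC.2.2.2.1.monotone hle
          _ < x.1 := hw1
      · have hlt2 : dk k < db := by
          have : dk k - db = (w - db) * θ := by simp only [hdk]; ring
          nlinarith
        calc dk k + C (dk k) < db + C db := hC.2.2.2.1 hlt2
          _ ≤ x.1 := by linarith
  have hux : ∀ k : ℕ, u x ≤ u (Gam C x (dk k)) := fun k =>
    uside_strict hC hu hx hMop (hstrict k).1 (hstrict k).2
  -- pass to the limit using upper semicontinuity at Gam C x db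
  by_contra hlt
  push_neg at hlt
  have hzmem : Gam C x db ∈ Sbar := hd
  have husc := hu _ hzmem (u x) hlt
  rw [eventually_nhdsWithin_iff] at husc
  have hdktend : Filter.Tendsto dk atTop (nhds db) := by
    have h0 : Filter.Tendsto (fun k : ℕ => 1 / ((k : ℝ) + 1)) atTop (nhds 0) :=
      tendsto_one_div_add_atTop_nhds_zero_nat
    have := (tendsto_const_nhds (x := db)).add ((tendsto_const_nhds (x := w - db)).mul h0)
    simpa [hdk] using this
  have hGamtend : Filter.Tendsto (fun k => Gam C x (dk k)) atTop (nhds (Gam C x db)) := by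
    unfold Gam
    exact (((tendsto_const_nhds (x := x.1)).sub hdktend).sub
      ((hC.1.tendsto db).comp hdktend)).prodMk_nhds ((tendsto_const_nhds (x := x.2)).add hdktend)
  have hevk := hGamtend.eventually husc
  have hmemk : ∀ k : ℕ, Gam C x (dk k) ∈ Sbar := fun k =>
    mem_Sbar.mpr ⟨by simp [Gam]; linarith [(hstrict k).2], by simp [Gam]; linarith [(hstrict k).1]⟩
  obtain ⟨k, hk⟩ := hevk.exists
  exact absurd (hux k) (not_le.mpr (hk (hmemk k)))

/-- v-side: a supersolution at a point dominated by its relaxed intervention value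
dominates its value after some feasible transaction. -/
lemma vside {C : ℝ → ℝ} (hC : IsCostFn C) {v : ℝ × ℝ → ℝ}
    (hv : LowerSemicontinuousOn v Sbar) {x : ℝ × ℝ} (hx : x ∈ Sbar)
    (hMop : lscEnv (Mop C v) Sbar x ≤ (v x : EReal)) :
    ∃ d ∈ Dset C x, v (Gam C x d) ≤ v x := by
  by_contra hcon
  push_neg at hcon
  -- Claim: a uniform strict lower bound near x
  have key : ∃ ε > 0, ∀ᶠ y : ℝ × ℝ in nhds x,
      ∀ d ∈ Dset C y, v x + ε ≤ v (Gam C y d) := by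
    by_contra h2
    push_neg at h2
    have H : ∀ k : ℕ, ∃ y : ℝ × ℝ, ∃ d : ℝ, dist y x < 1 / ((k : ℝ) + 1) ∧
        d ∈ Dset C y ∧ v (Gam C y d) < v x + 1 / ((k : ℝ) + 1) := by
      intro k
      have hεk : (0 : ℝ) < 1 / ((k : ℝ) + 1) := by positivity
      have hfreq := h2 _ hεk
      obtain ⟨y, hyball, hy2⟩ := Filter.frequently_iff.mp hfreq
        (Metric.ball_mem_nhds x hεk)
      obtain ⟨d, hd1, hd2⟩ := hy2
      exact ⟨y, d, by simpa [Metric.mem_ball] using hyball, hd1, by linarith⟩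
    choose y d hdist hD hvGam using H
    -- d is bounded
    have hdmem : ∀ k, d k ∈ Set.Icc (-(x.2 + 1)) (x.1 + 1) := by
      intro k
      obtain ⟨hk1, hk2⟩ := mem_Dset.mp (hD k)
      have hd2 : dist (y k).2 x.2 ≤ dist (y k) x := by
        rw [Prod.dist_eq]; exact le_max_right _ _
      have hd1 : dist (y k).1 x.1 ≤ dist (y k) x := by
        rw [Prod.dist_eq]; exact le_max_left _ _
      have hkle : dist (y k) x < 1 := lt_of_lt_of_le (hdist k) (by
        rw [div_le_one (by positivity)]; simp [Nat.cast_nonneg])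
      rw [Real.dist_eq] at hd1 hd2
      have h1 : |(y k).1 - x.1| < 1 := lt_of_le_of_lt hd1 hkle
      have h2' : |(y k).2 - x.2| < 1 := lt_of_le_of_lt hd2 hkle
      rw [abs_lt] at h1 h2'
      have hC0 := hC.2.2.1
      have hCd := cost_ge hC (d k)
      exact ⟨by linarith, by linarith⟩
    obtain ⟨db, _, φ, hφ, hdtend⟩ :=
      tendsto_subseq_of_bounded (Metric.isBounded_Icc (-(x.2 + 1)) (x.1 + 1)) hdmem
    -- y ∘ φ → x
    have hytend : Filter.Tendsto (fun k => y (φ k)) atTop (nhds x) := by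
      rw [tendsto_iff_dist_tendsto_zero]
      apply squeeze_zero (fun k => dist_nonneg) (fun k => (le_of_lt ?_))
        tendsto_one_div_add_atTop_nhds_zero_nat
      exact lt_of_lt_of_le (hdist (φ k)) (by
        apply one_div_le_one_div_of_le (by positivity)
        have := hφ.le_apply (x := k)
        exact_mod_cast by push_cast; linarith [(Nat.cast_le (α := ℝ)).mpr this])
    have hGamtend : Filter.Tendsto (fun k => Gam C (y (φ k)) (d (φ k))) atTop
        (nhds (Gam C x db)) := by
      unfold Gam
      have h1 : Filter.Tendsto (fun k => (y (φ k)).1) atTop (nhds x.1) :=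
        (continuous_fst.tendsto x).comp hytend
      have h2 : Filter.Tendsto (fun k => (y (φ k)).2) atTop (nhds x.2) :=
        (continuous_snd.tendsto x).comp hytend
      exact ((h1.sub hdtend).sub ((hC.1.tendsto db).comp hdtend)).prodMk_nhds (h2.add hdtend)
    have hGmem : ∀ k, Gam C (y (φ k)) (d (φ k)) ∈ Sbar := fun k => hD (φ k)
    have hzmem : Gam C x db ∈ Sbar :=
      sbar_closed.mem_of_tendsto hGamtend (Filter.Eventually.of_forall hGmem)
    have hdbD : db ∈ Dset C x := hzmem
    have hzlt : v x < v (Gam C x db) := hcon db hdbD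
    set ε₀ : ℝ := (v (Gam C x db) - v x) / 2 with hε₀
    have hε₀pos : 0 < ε₀ := by simp only [hε₀]; linarith
    have hlsc := hv _ hzmem (v x + ε₀) (by simp only [hε₀]; linarith)
    have htw : Filter.Tendsto (fun k => Gam C (y (φ k)) (d (φ k))) atTop
        (nhdsWithin (Gam C x db) Sbar) :=
      tendsto_nhdsWithin_iff.mpr ⟨hGamtend, Filter.Eventually.of_forall hGmem⟩
    have hev1 := htw.eventually hlsc
    obtain ⟨n, hn⟩ := exists_nat_one_div_lt hε₀pos
    have hev2 : ∀ᶠ k : ℕ in atTop, 1 / ((φ k : ℝ) + 1) < ε₀ := by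
      filter_upwards [Filter.eventually_ge_atTop n] with k hk
      have hφk : (n : ℝ) ≤ (φ k : ℝ) := by
        exact_mod_cast le_trans hk hφ.le_apply
      calc 1 / ((φ k : ℝ) + 1) ≤ 1 / ((n : ℝ) + 1) :=
            one_div_le_one_div_of_le (by positivity) (by linarith)
        _ < ε₀ := hn
    obtain ⟨k, hk1, hk2⟩ := (hev1.and hev2).exists
    have := hvGam (φ k)
    linarith
  obtain ⟨ε, hεpos, hevk⟩ := key
  have hlb : ((v x + ε : ℝ) : EReal) ≤ lscEnv (Mop C v) Sbar x := by
    refine Filter.le_liminf_of_le (h := ?_)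
    filter_upwards [hevk.filter_mono nhdsWithin_le_nhds] with yy hyy
    exact le_iInf₂ fun d hd => by exact_mod_cast hyy d hd
  have : v x + ε ≤ v x := by exact_mod_cast hlb.trans hMop
  linarith

/-- (Proposition: terminal comparison at the final deadline `T_K`.) -/
theorem terminal_comparison_TK
    (C : ℝ → ℝ) (hC : IsCostFn C)
    (wK GK : ℝ) (hw : 0 < wK) (hG : 0 < GK)
    (p₀ c : ℝ) (hp₀ : 0 < p₀) (hp₁ : p₀ < 1) (hc : 0 < c)
    (u v : ℝ × ℝ → ℝ)
    (hu_usc : UpperSemicontinuousOn u Sbar)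
    (hv_lsc : LowerSemicontinuousOn v Sbar)
    (hu_sub : ∀ x ∈ Sset,
      u x ≤ wK * max (GK - x.1 - max (x.2 - C (-x.2)) 0) 0 ∧
      (u x : EReal) ≤ uscEnv (Mop C u) Sbar x)
    (hv_super : ∀ x ∈ Sset,
      wK * max (GK - x.1 - max (x.2 - C (-x.2)) 0) 0 ≤ v x ∨
      lscEnv (Mop C v) Sbar x ≤ (v x : EReal))
    (hu0 : u (0, 0) ≤ v (0, 0))
    (hv0 : v (0, 0) = wK * GK)
    (hu_bd : ∀ x ∈ Sbar, 0 ≤ u x ∧ u x ≤ wK * GK)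
    (hv_bd : ∀ x ∈ Sbar, -(c * (1 + eunorm x ^ p₀)) ≤ v x ∧ v x ≤ wK * GK) :
    ∀ x ∈ Sbar, u x ≤ v x := by
  have hC0 : 0 < C 0 := hC.2.2.1
  have key : ∀ n : ℕ, ∀ x ∈ Sbar, x.1 + x.2 < n * C 0 → u x ≤ v x := by
    intro n
    induction n with
    | zero =>
      intro x hx hw'
      obtain ⟨h1, h2⟩ := mem_Sbar.mp hx
      simp only [Nat.cast_zero, zero_mul] at hw'
      linarith
    | succ n ih =>
      intro x hx hw'
      by_cases h0 : x = (0, 0)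
      · rw [h0]; exact hu0
      · have hxS : x ∈ Sset := ⟨hx, fun hmem => h0 hmem⟩
        rcases hv_super x hxS with h1 | h2
        · exact (hu_sub x hxS).1.trans h1
        · obtain ⟨d, hdD, hvd⟩ := vside hC hv_lsc hx h2
          have hzS : Gam C x d ∈ Sbar := hdD
          have hCd : C 0 ≤ C d := cost_ge hC d
          have hwz : (Gam C x d).1 + (Gam C x d).2 < n * C 0 := by
            have : (Gam C x d).1 + (Gam C x d).2 = x.1 + x.2 - C d := by
              simp [Gam]; ring
            rw [this]
            push_cast at hw' ⊢
            linarith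
          by_cases hz0 : Gam C x d = (0, 0)
          · have hvz : v (Gam C x d) = wK * GK := by rw [hz0, hv0]
            have := (hu_bd x hx).2
            linarith [hvd, hvz.symm.le]
          · obtain ⟨hmem1, hmem2⟩ := mem_Dset.mp hdD
            have hmono := hC.2.2.2.1.monotone (by linarith : -x.2 ≤ d)
            have hge : -x.2 + C (-x.2) ≤ x.1 := by linarith
            rcases lt_or_eq_of_le hge with hlt | heq
            · have hux := uside hC hu_usc hx (hu_sub x hxS).2 hdD hlt
              exact hux.trans ((ih _ hzS hwz).trans hvd)
            · exfalso
              apply hz0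
              have hgd : d + C d = -x.2 + C (-x.2) := by linarith
              have hdeq : d = -x.2 := hC.2.2.2.1.injective (by simpa using hgd)
              have : Gam C x d = (x.1 - d - C d, x.2 + d) := rfl
              rw [this, Prod.mk.injEq]
              constructor
              · rw [hdeq] at hgd ⊢
                linarith
              · linarith [hdeq]
  intro x hx
  obtain ⟨n, hn⟩ := exists_nat_gt ((x.1 + x.2) / C 0)
  refine key n x hx ?_
  rw [div_lt_iff₀ hC0] at hn
  linarith
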